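/- arXiv:2402.02305 — 5 statements merged into one kernel-verified Lean document; each statement's English description precedes it below -/
import Mathlib

section
/- For every integer r ≥ 3, ∑_{j=0}^{r-2} (-1)^j * C(r-1, j) * C(2r-3-2j, r-2) = 1, where C(n,k) denotes the binomial coefficient with the convention C(n,k) = 0 when n < k. -/
open Polynomial Finset

private lemma keyA (n : ℕ) :
    (1 + X) * (∑ j ∈ Finset.range n,
      C ((-1:ℤ)^j * (n.choose j : ℤ)) * ((1 + X)^(2*n - 1 - 2*j) * X^(2*j)))
      = (1 + 2*X)^n - (-(X^2))^n := by
  have h1 : (-(X^2) + (1+X)^2 : ℤ[X]) = 1 + 2*X := by ring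
  rw [← h1, add_pow, Finset.sum_range_succ]
  simp only [Nat.choose_self, Nat.cast_one, Nat.sub_self, pow_zero, mul_one]
  rw [add_sub_cancel_right, Finset.mul_sum]
  refine Finset.sum_congr rfl fun k hk => ?_
  rw [Finset.mem_range] at hk
  have e1 : ((1+X:ℤ[X])^2)^(n-k) = (1+X)^(2*n-1-2*k) * (1+X) := by
    rw [← pow_mul, show 2*(n-k) = (2*n - 1 - 2*k) + 1 by omega, pow_succ]
  have e2 : (-(X^2) : ℤ[X])^k = C ((-1:ℤ)^k) * X^(2*k) := by
    rw [neg_pow (X^2 : ℤ[X]), ← pow_mul]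
    simp [map_pow]
  rw [e1, e2]
  simp only [map_mul, map_pow, map_neg, map_one, map_natCast]
  ring

private lemma keyB (n : ℕ) (hn : 2 ≤ n) :
    (∑ j ∈ Finset.range n,
      C ((-1:ℤ)^j * (n.choose j : ℤ)) * ((1 + X)^(2*n - 1 - 2*j) * X^(2*j))).coeff n
    = ∑ j ∈ Finset.range n,
      (-1:ℤ)^j * (n.choose j : ℤ) * ((2*n - 1 - 2*j).choose (n-1) : ℤ) := by
  rw [finset_sum_coeff]
  refine Finset.sum_congr rfl fun j hj => ?_
  rw [Finset.mem_range] at hj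
  rw [coeff_C_mul, coeff_mul_X_pow']
  by_cases h : 2*j ≤ n
  · rw [if_pos h, coeff_one_add_X_pow]
    have h2 : n - 2*j ≤ 2*n-1-2*j := by omega
    have h3 := Nat.choose_symm h2
    rw [show 2*n-1-2*j - (n - 2*j) = n - 1 by omega] at h3
    rw [← h3]
  · rw [if_neg h, Nat.choose_eq_zero_of_lt (by omega : 2*n-1-2*j < n-1)]
    simp

private lemma keyG (n m : ℕ) (hm : m ≤ n) :
    (∑ k ∈ Finset.range (n+1), C ((-1:ℤ)^k) * X^k).coeff m = (-1:ℤ)^m := by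
  rw [finset_sum_coeff]
  simp only [coeff_C_mul, coeff_X_pow, mul_ite, mul_one, mul_zero]
  rw [Finset.sum_ite_eq (Finset.range (n+1)) m]
  simp [Nat.lt_succ_of_le hm]

private lemma keyG1 (n : ℕ) :
    (1 + X) * (∑ k ∈ Finset.range (n+1), C ((-1:ℤ)^k) * X^k) = 1 - (-X)^(n+1) := by
  have h0 : (∑ k ∈ Finset.range (n+1), C ((-1:ℤ)^k) * X^k)
      = ∑ k ∈ Finset.range (n+1), (-X)^k := by
    refine Finset.sum_congr rfl fun k _ => ?_
    rw [neg_pow (X : ℤ[X])]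
    simp [map_pow]
  rw [h0]
  have := geom_sum_mul (-X : ℤ[X]) (n+1)
  linear_combination -this

private lemma keyC1 (n : ℕ) :
    ((1 + 2*X : ℤ[X])^n * (∑ k ∈ Finset.range (n+1), C ((-1:ℤ)^k) * X^k)).coeff n = 1 := by
  have hexp : (1 + 2*X : ℤ[X])^n
      = ∑ k ∈ Finset.range (n+1), C ((2:ℤ)^k * (n.choose k : ℤ)) * X^k := by
    rw [show (1 + 2*X : ℤ[X]) = 2*X + 1 by ring, add_pow]
    refine Finset.sum_congr rfl fun k _ => ?_
    rw [mul_pow, one_pow, mul_one]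
    simp only [map_mul, map_pow, map_natCast, map_ofNat]
    ring
  rw [hexp, Finset.sum_mul, finset_sum_coeff]
  have hterm : ∀ k ∈ Finset.range (n+1),
      (C ((2:ℤ)^k * (n.choose k : ℤ)) * X^k
        * (∑ k ∈ Finset.range (n+1), C ((-1:ℤ)^k) * X^k)).coeff n
      = (2:ℤ)^k * (n.choose k : ℤ) * (-1)^(n-k) := by
    intro k hk
    rw [Finset.mem_range] at hk
    rw [mul_assoc, coeff_C_mul, mul_comm (X^k), coeff_mul_X_pow',
      if_pos (by omega : k ≤ n), keyG n (n-k) (by omega)]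
  rw [Finset.sum_congr rfl hterm]
  have h := add_pow (2:ℤ) (-1) n
  norm_num at h
  rw [Finset.sum_congr rfl (fun (k:ℕ) (_ : k ∈ Finset.range (n+1)) =>
    (by ring : (2:ℤ)^k * (n.choose k : ℤ) * (-1)^(n-k) = 2^k * (-1)^(n-k) * (n.choose k : ℤ)))]
  exact h.symm

private lemma key (n : ℕ) (hn : 2 ≤ n) :
    ∑ j ∈ Finset.range n, (-1:ℤ)^j * (n.choose j : ℤ) * ((2*n - 1 - 2*j).choose (n-1) : ℤ) = 1 := by
  set P : ℤ[X] := ∑ j ∈ Finset.range n,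
    C ((-1:ℤ)^j * (n.choose j : ℤ)) * ((1 + X)^(2*n - 1 - 2*j) * X^(2*j)) with hP
  set G : ℤ[X] := ∑ k ∈ Finset.range (n+1), C ((-1:ℤ)^k) * X^k with hG
  have hPQ : P - P * (-X)^(n+1) = ((1 + 2*X)^n - (-(X^2))^n) * G := by
    linear_combination G * keyA n - P * keyG1 n
  have hc := congrArg (fun q : ℤ[X] => q.coeff n) hPQ
  simp only [coeff_sub] at hc
  have z1 : (P * (-X)^(n+1)).coeff n = 0 := by
    rw [show P * (-X)^(n+1) = (C ((-1:ℤ)^(n+1)) * P) * X^(n+1) by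
      rw [neg_pow (X : ℤ[X])]; simp [map_pow]; ring]
    rw [coeff_mul_X_pow', if_neg (by omega)]
  have z2 : ((-(X^2) : ℤ[X])^n * G).coeff n = 0 := by
    rw [show (-(X^2) : ℤ[X])^n * G = (C ((-1:ℤ)^n) * G) * X^(2*n) by
      rw [neg_pow (X^2 : ℤ[X]), ← pow_mul]; simp [map_pow]; ring]
    rw [coeff_mul_X_pow', if_neg (by omega)]
  rw [sub_mul] at hc
  simp only [coeff_sub] at hc
  rw [z1, z2, sub_zero, sub_zero, keyB n hn, keyC1 n] at hc
  exact hc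

/-- Through `r-1` generic codimension-2 linear subspaces of `ℙ^{r-1}` passes a unique
hypersurface of degree `r-2`: the combinatorial identity
`∑_{j=0}^{r-2} (-1)^j C(r-1,j) C(2r-3-2j, r-2) = 1` for every `r ≥ 3`.
(Here `C(n,k) = Nat.choose n k`, which vanishes when `n < k`.) -/
theorem alternating_sum_choose_eq_one (r : ℕ) (hr : 3 ≤ r) :
    ∑ j ∈ Finset.range (r - 1),
      (-1 : ℤ) ^ j * ((r - 1).choose j : ℤ) * ((2 * r - 3 - 2 * j).choose (r - 2) : ℤ) = 1 := by
  obtain ⟨n, rfl⟩ : ∃ n, r = n + 1 := ⟨r - 1, by omega⟩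
  have hn : 2 ≤ n := by omega
  refine Eq.trans (Finset.sum_congr (by norm_num) fun j hj => ?_) (key n hn)
  rw [show n + 1 - 1 = n from rfl, show n + 1 - 2 = n - 1 from rfl,
    show 2 * (n+1) - 3 - 2*j = 2*n - 1 - 2*j by omega]
end

section
/- For every integer r ≥ 3, ∑_{j≥0} (-1)^j * C(2r-3, j) * C(3r-6-2j, 2r-5) = 0, where C(n,k) is the binomial coefficient with C(n,k)=0 if n<k, and the sum is over all j for which the terms are nonzero. -/
open PowerSeries Finset in
private theorem key_alt_sum (s : ℕ) :
    ∑ j ∈ Finset.range (2 * s + 4),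
      (-1 : ℤ) ^ j * ((2 * s + 3).choose j : ℤ) * ((3 * s + 3 - 2 * j).choose (2 * s + 1) : ℤ)
      = 0 := by
  set B : ℤ⟦X⟧ := (invOneSubPow ℤ (2 * s + 2)).val with hBdef
  have hBcoeff : ∀ m : ℕ, PowerSeries.coeff (R := ℤ) m B = ((2 * s + 1 + m).choose (2 * s + 1) : ℤ) := by
    intro m
    have : (2 : ℕ) * s + 2 = (2 * s + 1) + 1 := by omega
    rw [hBdef, this, invOneSubPow_val_succ_eq_mk_add_choose, PowerSeries.coeff_mk]
  have hB1 : ((1 : ℤ⟦X⟧) - X) ^ (2 * s + 2) * B = 1 := by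
    rw [hBdef, ← invOneSubPow_inv_eq_one_sub_pow]
    exact (invOneSubPow ℤ (2 * s + 2)).inv_val
  -- Factorization identity
  have hfact : ((1 : ℤ⟦X⟧) - X ^ 2) ^ (2 * s + 3) * B = (1 + X) ^ (2 * s + 3) * (1 - X) := by
    have h2 : ((1 : ℤ⟦X⟧) - X ^ 2) ^ (2 * s + 3) * B
        = (1 + X) ^ (2 * s + 3) * (1 - X) * (((1 - X) ^ (2 * s + 2)) * B) := by
      have hfac : ((1 : ℤ⟦X⟧) - X ^ 2) = (1 - X) * (1 + X) := by ring
      rw [hfac, mul_pow]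
      ring
    rw [h2, hB1, mul_one]
  -- Expand (1 - X^2)^(2s+3) as a sum
  have hexp : ((1 : ℤ⟦X⟧) - X ^ 2) ^ (2 * s + 3) * B
      = ∑ j ∈ range (2 * s + 4),
          ((-1 : ℤ) ^ j * ((2 * s + 3).choose j : ℤ)) • (X ^ (2 * j) * B) := by
    have : ((1 : ℤ⟦X⟧) - X ^ 2) ^ (2 * s + 3) = (-(X ^ 2) + 1) ^ (2 * s + 3) := by ring
    rw [this, add_pow, Finset.sum_mul]
    apply Finset.sum_congr rfl
    intro j _
    rw [zsmul_eq_mul]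
    push_cast
    rw [neg_pow, ← pow_mul]
    ring
  -- coefficient s+2 of the RHS is 0
  have hrhs : PowerSeries.coeff (R := ℤ) (s + 2) ((1 + X) ^ (2 * s + 3) * (1 - X) : ℤ⟦X⟧) = 0 := by
    have hcoe : ((1 + X) ^ (2 * s + 3) * (1 - X) : ℤ⟦X⟧)
        = (((1 + Polynomial.X) ^ (2 * s + 3) * (1 - Polynomial.X) : Polynomial ℤ) : ℤ⟦X⟧) := by
      rw [Polynomial.coe_mul, Polynomial.coe_pow, Polynomial.coe_add, Polynomial.coe_sub,
        Polynomial.coe_one, Polynomial.coe_X]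
    rw [hcoe, Polynomial.coeff_coe]
    rw [mul_sub, mul_one, Polynomial.coeff_sub, Polynomial.coeff_mul_X,
      Polynomial.coeff_one_add_X_pow]
    rw [Polynomial.coeff_one_add_X_pow]
    have : (2 * s + 3).choose (s + 2) = (2 * s + 3).choose (s + 1) := by
      have h := Nat.choose_symm (n := 2 * s + 3) (k := s + 2) (by omega)
      have h2 : 2 * s + 3 - (s + 2) = s + 1 := by omega
      rw [h2] at h
      omega
    rw [this]
    ring
  -- take coefficients
  have hco := congrArg (PowerSeries.coeff (R := ℤ) (s + 2)) (hexp.symm.trans hfact)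
  rw [hrhs, map_sum] at hco
  rw [← hco]
  apply Finset.sum_congr rfl
  intro j hj
  rw [map_smul, coeff_X_pow_mul', smul_eq_mul]
  by_cases h : 2 * j ≤ s + 2
  · rw [if_pos h, hBcoeff]
    have : 2 * s + 1 + (s + 2 - 2 * j) = 3 * s + 3 - 2 * j := by omega
    rw [this, mul_assoc]
  · rw [if_neg h, mul_zero]
    have : (3 * s + 3 - 2 * j).choose (2 * s + 1) = 0 :=
      Nat.choose_eq_zero_of_lt (by omega)
    rw [this]
    push_cast
    ring

/-- For every `r ≥ 3`, `∑_{j=0}^{2r-3} (-1)^j C(2r-3,j) C(3r-6-2j, 2r-5) = 0`,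
where `C(n,k) = Nat.choose n k` (so `C(n,k) = 0` when `n < k`); the sum over
`j ∈ range (2r-2)` includes all indices with a nonzero term. -/
theorem alternating_sum_choose_eq_zero (r : ℕ) (hr : 3 ≤ r) :
    ∑ j ∈ Finset.range (2 * r - 2),
      (-1 : ℤ) ^ j * ((2 * r - 3).choose j : ℤ) * ((3 * r - 6 - 2 * j).choose (2 * r - 5) : ℤ)
      = 0 := by
  obtain ⟨s, rfl⟩ := Nat.exists_eq_add_of_le hr
  have h1 : 2 * (3 + s) - 2 = 2 * s + 4 := by omega
  have h2 : 2 * (3 + s) - 3 = 2 * s + 3 := by omega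
  have h3 : 2 * (3 + s) - 5 = 2 * s + 1 := by omega
  rw [h1, h2, h3, ← key_alt_sum s]
  apply Finset.sum_congr rfl
  intro j _
  have h4 : 3 * (3 + s) - 6 - 2 * j = 3 * s + 3 - 2 * j := by omega
  rw [h4]
end

section
/- For every integer r ≥ 3 and n = 2r-3, ∑_{j≥0} (-1)^j * C(n,j) * C(n+r-2-2j, n-1) = ∑_{j≥0} (-1)^j * C(n,j) * C(n+r-3-2j, n-1), where C denotes the binomial coefficient with the convention C(a,b)=0 when a<b. -/
open PowerSeries Finset

/-- Key identity: for `n ≥ 2`, `∑_j (-1)^j C(n,j) C(n+k-2j, n-1) = C(n, k+1)`,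
proved by extracting the coefficient of `X^(k+1)` in `(1-X²)ⁿ/(1-X)ⁿ = (1+X)ⁿ`. -/
lemma alternating_sum_choose_eq_choose (n k : ℕ) (hn : 2 ≤ n) :
    ∑ j ∈ Finset.range (n + 1),
        (-1 : ℤ) ^ j * (n.choose j : ℤ) * ((n + k - 2 * j).choose (n - 1) : ℤ)
      = (n.choose (k + 1) : ℤ) := by
  have hpos : 0 < n := by omega
  set I : ℤ⟦X⟧ := (invOneSubPow ℤ n).val with hI
  have hinv : (1 - X : ℤ⟦X⟧) ^ n * I = 1 := by
    rw [hI, ← invOneSubPow_inv_eq_one_sub_pow]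
    exact (invOneSubPow ℤ n).inv_val
  have h2 : (1 - X ^ 2 : ℤ⟦X⟧) ^ n * I = (1 + X) ^ n := by
    have : (1 - X ^ 2 : ℤ⟦X⟧) ^ n = (1 + X) ^ n * (1 - X) ^ n := by
      rw [← mul_pow]; ring_nf
    rw [this, mul_assoc, hinv, mul_one]
  have hcoeff := congrArg (PowerSeries.coeff (R := ℤ) (k + 1)) h2
  have hr : PowerSeries.coeff (R := ℤ) (k + 1) ((1 + X : ℤ⟦X⟧) ^ n) = (n.choose (k + 1) : ℤ) := by
    have hexp1 : (1 + X : ℤ⟦X⟧) ^ n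
        = ∑ j ∈ Finset.range (n + 1), ((n.choose j : ℤ)) • (X ^ j : ℤ⟦X⟧) := by
      rw [add_comm, add_pow]
      refine Finset.sum_congr rfl fun j _ => ?_
      simp [zsmul_eq_mul, mul_comm]
    rw [hexp1, map_sum]
    simp only [LinearMap.map_smul_of_tower, coeff_X_pow, smul_eq_mul, mul_ite, mul_one, mul_zero]
    rw [Finset.sum_ite_eq (Finset.range (n + 1)) (k + 1)]
    split
    · rfl
    · rename_i h
      rw [Finset.mem_range, not_lt] at h
      rw [Nat.choose_eq_zero_of_lt (by omega)]; simp
  have hexp : (1 - X ^ 2 : ℤ⟦X⟧) ^ n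
      = ∑ j ∈ Finset.range (n + 1), ((-1 : ℤ) ^ j * (n.choose j : ℤ)) • (X ^ (2 * j) : ℤ⟦X⟧) := by
    rw [sub_eq_add_neg, add_comm, add_pow]
    refine Finset.sum_congr rfl fun j _ => ?_
    rw [neg_pow, one_pow, mul_one, pow_mul]
    simp [zsmul_eq_mul, mul_comm, mul_assoc, mul_left_comm]
  have hIcoeff : ∀ m, PowerSeries.coeff (R := ℤ) m I = ((n - 1 + m).choose (n - 1) : ℤ) := by
    intro m
    rw [hI, invOneSubPow_val_eq_mk_sub_one_add_choose_of_pos _ _ hpos, coeff_mk]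
  have hl : PowerSeries.coeff (R := ℤ) (k + 1) ((1 - X ^ 2 : ℤ⟦X⟧) ^ n * I)
      = ∑ j ∈ Finset.range (n + 1), ((-1 : ℤ) ^ j * (n.choose j : ℤ)) *
          (if 2 * j ≤ k + 1 then ((n - 1 + (k + 1 - 2 * j)).choose (n - 1) : ℤ) else 0) := by
    rw [hexp, Finset.sum_mul, map_sum]
    refine Finset.sum_congr rfl fun j _ => ?_
    rw [smul_mul_assoc, LinearMap.map_smul_of_tower, smul_eq_mul, mul_comm (X ^ (2 * j)) I,
      coeff_mul_X_pow']
    split <;> simp [hIcoeff]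
  rw [hl, hr] at hcoeff
  rw [← hcoeff]
  refine Finset.sum_congr rfl fun j hj => ?_
  congr 1
  split
  · congr 2; omega
  · rw [Nat.choose_eq_zero_of_lt (by omega)]; simp

/-- For `r ≥ 3` and `n = 2r-3`, the two alternating binomial sums
`∑_j (-1)^j C(n,j) C(n+r-2-2j, n-1)` and `∑_j (-1)^j C(n,j) C(n+r-3-2j, n-1)` coincide
(equality of the Hilbert function values of a generic codimension-2 subspace arrangement
and of its generic hyperplane section in degree `n-1`). -/
theorem alternating_sums_choose_eq (r n : ℕ) (hr : 3 ≤ r) (hn : n = 2 * r - 3) :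
    ∑ j ∈ Finset.range (n + 1),
        (-1 : ℤ) ^ j * (n.choose j : ℤ) * ((n + r - 2 - 2 * j).choose (n - 1) : ℤ) =
      ∑ j ∈ Finset.range (n + 1),
        (-1 : ℤ) ^ j * (n.choose j : ℤ) * ((n + r - 3 - 2 * j).choose (n - 1) : ℤ) := by
  have hn2 : 2 ≤ n := by omega
  have h1 : ∑ j ∈ Finset.range (n + 1),
        (-1 : ℤ) ^ j * (n.choose j : ℤ) * ((n + r - 2 - 2 * j).choose (n - 1) : ℤ)
      = (n.choose (r - 1) : ℤ) := by
    have := alternating_sum_choose_eq_choose n (r - 2) hn2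
    rw [show r - 2 + 1 = r - 1 by omega] at this
    rw [← this]
    refine Finset.sum_congr rfl fun j _ => ?_
    congr 3
    omega
  have h2 : ∑ j ∈ Finset.range (n + 1),
        (-1 : ℤ) ^ j * (n.choose j : ℤ) * ((n + r - 3 - 2 * j).choose (n - 1) : ℤ)
      = (n.choose (r - 2) : ℤ) := by
    have := alternating_sum_choose_eq_choose n (r - 3) hn2
    rw [show r - 3 + 1 = r - 2 by omega] at this
    rw [← this]
    refine Finset.sum_congr rfl fun j _ => ?_
    congr 3
    omega
  rw [h1, h2]
  have : n.choose (r - 1) = n.choose (r - 2) := by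
    have hsymm := Nat.choose_symm (n := n) (k := r - 2) (by omega)
    rw [← hsymm]
    congr 1
    omega
  rw [this]
end

section
/- Let S = k[x_1,…,x_r] with r ≥ 4 and let i ≥ 0 with 4 + i ≤ r. In the ring S[λ], the ideal J_λ = (x_1, λ(x_2 - x_3) + x_3) ∩ (x_3, …, x_{i+4}) equals the product ideal (x_1, λ(x_2 - x_3) + x_3) · (x_3, …, x_{i+4}). -/
open Polynomial MvPolynomial

section Aux

variable {k : Type*} [CommRing k] {σ : Type*}

/-- `X j` is prime in a multivariate polynomial ring over a domain. -/
lemma mvPrime_X_aux [IsDomain k] (j : σ) :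
    Prime (MvPolynomial.X j : MvPolynomial σ k) := by
  classical
  let e : MvPolynomial σ k ≃* Polynomial (MvPolynomial {x : σ // x ≠ j} k) :=
    ((MvPolynomial.renameEquiv k (Equiv.optionSubtypeNe j).symm).trans
      (MvPolynomial.optionEquivLeft k {x : σ // x ≠ j})).toRingEquiv.toMulEquiv
  rw [← MulEquiv.prime_iff e]
  have he : e (MvPolynomial.X j) = Polynomial.X := by
    show (MvPolynomial.optionEquivLeft k _)
      ((MvPolynomial.renameEquiv k (Equiv.optionSubtypeNe j).symm) (MvPolynomial.X j)) = _
    rw [MvPolynomial.renameEquiv_apply, MvPolynomial.rename_X,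
      Equiv.optionSubtypeNe_symm_self, MvPolynomial.optionEquivLeft_X_none]
  rw [he]
  exact Polynomial.prime_X

/-- Reducing modulo the variables satisfying `P` changes an MvPolynomial by an element of
the ideal generated by those variables. -/
lemma sub_aeval_mem (P : σ → Prop) [DecidablePred P] (q : MvPolynomial σ k) :
    q - MvPolynomial.aeval (fun j => if P j then 0 else MvPolynomial.X j) q ∈
      Ideal.span (MvPolynomial.X '' {j | P j}) := by
  induction q using MvPolynomial.induction_on with
  | C a => simp
  | add p q hp hq =>
      have h := Ideal.add_mem _ hp hq
      convert h using 1
      rw [map_add]; ring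
  | mul_X p n hp =>
      have hmul : (MvPolynomial.aeval (fun j => if P j then 0 else MvPolynomial.X j) :
            MvPolynomial σ k →ₐ[k] MvPolynomial σ k) (p * MvPolynomial.X n) =
          (MvPolynomial.aeval (fun j => if P j then 0 else MvPolynomial.X j) :
            MvPolynomial σ k →ₐ[k] MvPolynomial σ k) p *
            (if P n then 0 else MvPolynomial.X n) := by
        rw [map_mul, MvPolynomial.aeval_X]
      rw [hmul]
      by_cases h : P n
      · rw [if_pos h, mul_zero, sub_zero]
        have hXn : (MvPolynomial.X n : MvPolynomial σ k) ∈
            Ideal.span (MvPolynomial.X '' {j | P j} : Set (MvPolynomial σ k)) :=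
          Ideal.subset_span ⟨n, h, rfl⟩
        have e : p * MvPolynomial.X n =
            (p - MvPolynomial.aeval (fun j => if P j then 0 else MvPolynomial.X j) p)
              * MvPolynomial.X n +
            (MvPolynomial.aeval (fun j => if P j then 0 else MvPolynomial.X j) p)
              * MvPolynomial.X n := by ring
        rw [e]
        exact Ideal.add_mem _ (Ideal.mul_mem_right _ _ hp) (Ideal.mul_mem_left _ _ hXn)
      · rw [if_neg h]
        have e : p * MvPolynomial.X n -
            (MvPolynomial.aeval (fun j => if P j then 0 else MvPolynomial.X j) p)
              * MvPolynomial.X n =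
            (p - MvPolynomial.aeval (fun j => if P j then 0 else MvPolynomial.X j) p)
              * MvPolynomial.X n := by ring
        rw [e]
        exact Ideal.mul_mem_right _ _ hp

/-- Polynomial-ring version of `sub_aeval_mem`. -/
lemma sub_map_mem (P : σ → Prop) [DecidablePred P] (q : Polynomial (MvPolynomial σ k)) :
    q - Polynomial.map
        (MvPolynomial.aeval (fun j => if P j then 0 else MvPolynomial.X j)
          : MvPolynomial σ k →ₐ[k] MvPolynomial σ k).toRingHom q ∈
      Ideal.span ((fun j => Polynomial.C (MvPolynomial.X j : MvPolynomial σ k)) '' {j | P j}) := by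
  have hC : ∀ a ∈ Ideal.span (MvPolynomial.X '' {j | P j}),
      (Polynomial.C a : Polynomial (MvPolynomial σ k)) ∈
        Ideal.span ((fun j => Polynomial.C (MvPolynomial.X j : MvPolynomial σ k))
          '' {j | P j}) := by
    intro a ha
    have hle : Ideal.span (MvPolynomial.X '' {j | P j}) ≤
        Ideal.comap (Polynomial.C : MvPolynomial σ k →+* Polynomial (MvPolynomial σ k))
          (Ideal.span ((fun j => Polynomial.C (MvPolynomial.X j : MvPolynomial σ k))
            '' {j | P j})) := by
      rw [Ideal.span_le]
      rintro _ ⟨j, hj, rfl⟩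
      exact Ideal.subset_span ⟨j, hj, rfl⟩
    exact hle ha
  induction q using Polynomial.induction_on' with
  | add p q hp hq =>
      have h := Ideal.add_mem _ hp hq
      convert h using 1
      rw [Polynomial.map_add]; ring
  | monomial n a =>
      rw [Polynomial.map_monomial, ← Polynomial.C_mul_X_pow_eq_monomial,
        ← Polynomial.C_mul_X_pow_eq_monomial, ← sub_mul, ← Polynomial.C_sub]
      exact Ideal.mul_mem_right _ _ (hC _ (sub_aeval_mem P a))

end Aux

lemma main_aux {k : Type*} [Field k] {σ : Type*} (P : σ → Prop) [DecidablePred P]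
    (a0 a1 a2 : σ) (h0 : ¬ P a0) (h1 : ¬ P a1) (h2 : P a2) (h01 : a0 ≠ a1) :
    (Ideal.span {Polynomial.C (MvPolynomial.X a0 : MvPolynomial σ k),
        Polynomial.X * Polynomial.C (MvPolynomial.X a1 - MvPolynomial.X a2) +
          Polynomial.C (MvPolynomial.X a2)} ⊓
      Ideal.span ((fun j => Polynomial.C (MvPolynomial.X j : MvPolynomial σ k)) '' {j | P j})) =
    Ideal.span {Polynomial.C (MvPolynomial.X a0 : MvPolynomial σ k),
        Polynomial.X * Polynomial.C (MvPolynomial.X a1 - MvPolynomial.X a2) +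
          Polynomial.C (MvPolynomial.X a2)} *
      Ideal.span ((fun j => Polynomial.C (MvPolynomial.X j : MvPolynomial σ k)) '' {j | P j}) := by
  classical
  set f : Polynomial (MvPolynomial σ k) := Polynomial.C (MvPolynomial.X a0) with hfdef
  set g : Polynomial (MvPolynomial σ k) :=
    Polynomial.X * Polynomial.C (MvPolynomial.X a1 - MvPolynomial.X a2) +
      Polynomial.C (MvPolynomial.X a2) with hgdef
  set A : Ideal (Polynomial (MvPolynomial σ k)) := Ideal.span {f, g} with hAdef
  set B : Ideal (Polynomial (MvPolynomial σ k)) :=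
    Ideal.span ((fun j => Polynomial.C (MvPolynomial.X j : MvPolynomial σ k)) '' {j | P j})
    with hBdef
  refine le_antisymm ?_ Ideal.mul_le_inf
  intro p hp
  obtain ⟨hpA, hpB⟩ := Submodule.mem_inf.mp hp
  obtain ⟨a, b, hab⟩ := Ideal.mem_span_pair.mp hpA
  set φ : Polynomial (MvPolynomial σ k) →+* Polynomial (MvPolynomial σ k) :=
    Polynomial.mapRingHom
      (MvPolynomial.aeval (fun j => if P j then 0 else MvPolynomial.X j)
        : MvPolynomial σ k →ₐ[k] MvPolynomial σ k).toRingHom with hφdef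
  have hkey : ∀ q, q - φ q ∈ B := by
    intro q
    simpa [φ, Polynomial.coe_mapRingHom] using sub_map_mem P q
  have hφB : φ p = 0 := by
    have hle : B ≤ Ideal.comap φ ⊥ := by
      rw [hBdef, Ideal.span_le]
      rintro _ ⟨j, hj, rfl⟩
      have hj' : P j := hj
      simp only [SetLike.mem_coe, Ideal.mem_comap, Ideal.mem_bot]
      show φ (Polynomial.C (MvPolynomial.X j)) = 0
      simp [φ, if_pos hj']
    simpa using hle hpB
  have hφf : φ f = f := by
    simp [φ, f, if_neg h0]
  have hφg : φ g = Polynomial.X * Polynomial.C (MvPolynomial.X a1) := by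
    simp [φ, g, if_neg h1, if_pos h2]
  have heq : φ a * f + φ b * (Polynomial.X * Polynomial.C (MvPolynomial.X a1)) = 0 := by
    have h := congrArg φ hab
    rw [map_add, map_mul, map_mul, hφf, hφg, hφB] at h
    exact h
  have hXprime : Prime (Polynomial.X : Polynomial (MvPolynomial σ k)) := Polynomial.prime_X
  have hCx1prime : Prime (Polynomial.C (MvPolynomial.X a1) : Polynomial (MvPolynomial σ k)) :=
    Polynomial.prime_C_iff.mpr (mvPrime_X_aux a1)
  have hXdvd : (Polynomial.X : Polynomial (MvPolynomial σ k)) ∣ φ a := by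
    have hd : (Polynomial.X : Polynomial (MvPolynomial σ k)) ∣ φ a * f :=
      ⟨-(φ b * Polynomial.C (MvPolynomial.X a1)), by linear_combination heq⟩
    rcases hXprime.2.2 _ _ hd with h | h
    · exact h
    · exfalso
      obtain ⟨q, hq⟩ := h
      have h' := congrArg (Polynomial.eval 0) hq
      simp [f] at h'
  obtain ⟨a', ha'⟩ := hXdvd
  have heq2 : a' * f + φ b * Polynomial.C (MvPolynomial.X a1) = 0 := by
    have hX0 : (Polynomial.X : Polynomial (MvPolynomial σ k)) ≠ 0 := Polynomial.X_ne_zero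
    have h : Polynomial.X *
        (a' * f + φ b * Polynomial.C (MvPolynomial.X a1)) = 0 := by
      rw [ha'] at heq
      linear_combination heq
    rcases mul_eq_zero.mp h with h' | h'
    · exact absurd h' hX0
    · exact h'
  have hCdvd : Polynomial.C (MvPolynomial.X a1) ∣ a' := by
    have hd : Polynomial.C (MvPolynomial.X a1) ∣ a' * f :=
      ⟨-(φ b), by linear_combination heq2⟩
    rcases hCx1prime.2.2 _ _ hd with h | h
    · exact h
    · exfalso
      obtain ⟨q, hq⟩ := h
      have h' := congrArg (fun t => Polynomial.coeff t 0) hq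
      simp only [hfdef, Polynomial.coeff_C_zero, Polynomial.coeff_C_mul] at h'
      have h'' := congrArg
        (MvPolynomial.aeval (fun j => if j = a1 then (0 : MvPolynomial σ k)
          else MvPolynomial.X j)) h'
      simp only [map_mul, MvPolynomial.aeval_X, if_neg h01, if_pos rfl, if_true, zero_mul,
        eq_self_iff_true] at h''
      exact MvPolynomial.X_ne_zero a0 h''
  obtain ⟨c, hc⟩ := hCdvd
  have hCx1ne : (Polynomial.C (MvPolynomial.X a1) : Polynomial (MvPolynomial σ k)) ≠ 0 := by
    simpa using MvPolynomial.X_ne_zero (R := k) a1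
  have hφb : φ b = -(c * f) := by
    have h : Polynomial.C (MvPolynomial.X a1) * (c * f + φ b) = 0 := by
      rw [hc] at heq2
      linear_combination heq2
    rcases mul_eq_zero.mp h with h' | h'
    · exact absurd h' hCx1ne
    · linear_combination h'
  have hφa : φ a = c * φ g := by
    rw [ha', hc, hφg]; ring
  have hB1 : a - c * g ∈ B := by
    have e1 : a - c * g = (a - φ a) - c * (g - φ g) := by rw [hφa]; ring
    rw [e1]
    exact Ideal.sub_mem _ (hkey a) (Ideal.mul_mem_left _ _ (hkey g))
  have hB2 : b + c * f ∈ B := by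
    have e2 : b + c * f = b - φ b := by rw [hφb]; ring
    rw [e2]
    exact hkey b
  have hfA : f ∈ A := Ideal.subset_span (Set.mem_insert _ _)
  have hgA : g ∈ A := Ideal.subset_span (Set.mem_insert_of_mem _ rfl)
  have hsplit : p = f * (a - c * g) + g * (b + c * f) := by rw [← hab]; ring
  rw [hsplit]
  exact Ideal.add_mem _ (Ideal.mul_mem_mul hfA hB1) (Ideal.mul_mem_mul hgA hB2)

/-- In `S[λ] = k[x_1,…,x_r][λ]` (with `x_j` realized as `MvPolynomial.X (j-1)` and `λ` as
the polynomial variable), for `r ≥ 4` and `4 + i ≤ r` the ideal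
`(x_1, λ(x_2 - x_3) + x_3) ∩ (x_3, …, x_{i+4})` equals the product
`(x_1, λ(x_2 - x_3) + x_3) · (x_3, …, x_{i+4})`. -/
theorem intersection_eq_product_sundial_family (k : Type*) [Field k] (r i : ℕ)
    (hr : 4 ≤ r) (hi : 4 + i ≤ r) :
    (Ideal.span {Polynomial.C (MvPolynomial.X (⟨0, by omega⟩ : Fin r) : MvPolynomial (Fin r) k),
        Polynomial.X * Polynomial.C (MvPolynomial.X ⟨1, by omega⟩ - MvPolynomial.X ⟨2, by omega⟩) +
          Polynomial.C (MvPolynomial.X ⟨2, by omega⟩)} ⊓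
      Ideal.span ((fun j => Polynomial.C (MvPolynomial.X j :
          MvPolynomial (Fin r) k)) '' {j : Fin r | 2 ≤ (j : ℕ) ∧ (j : ℕ) ≤ i + 3})) =
    Ideal.span {Polynomial.C (MvPolynomial.X (⟨0, by omega⟩ : Fin r) : MvPolynomial (Fin r) k),
        Polynomial.X * Polynomial.C (MvPolynomial.X ⟨1, by omega⟩ - MvPolynomial.X ⟨2, by omega⟩) +
          Polynomial.C (MvPolynomial.X ⟨2, by omega⟩)} *
      Ideal.span ((fun j => Polynomial.C (MvPolynomial.X j :
          MvPolynomial (Fin r) k)) '' {j : Fin r | 2 ≤ (j : ℕ) ∧ (j : ℕ) ≤ i + 3}) := by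
  exact main_aux (fun j : Fin r => 2 ≤ (j : ℕ) ∧ (j : ℕ) ≤ i + 3)
    ⟨0, by omega⟩ ⟨1, by omega⟩ ⟨2, by omega⟩
    (by show ¬(2 ≤ 0 ∧ 0 ≤ i + 3); omega) (by show ¬(2 ≤ 1 ∧ 1 ≤ i + 3); omega)
    (by show 2 ≤ 2 ∧ 2 ≤ i + 3; omega) (by simp)
end

section
/- Let S = k[x_1,…,x_r] with r ≥ 4 and 4 + i ≤ r. The ideal (x_1, x_3)·(x_3, x_4, …, x_{i+4}) in S equals the intersection (x_1, x_3) ∩ (x_3, …, x_{i+4}) ∩ (x_1, x_3, …, x_{i+4})², i.e., the product ideal defining a degenerate union of two linear spaces is the ideal of a (2, i+2)-sundial. -/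
open MvPolynomial Pointwise

section aux

variable {σ : Type*} {K : Type*} [Field K]

lemma my_pair_le_of {a b : σ} {m : σ →₀ ℕ} (hab : a ≠ b) (ha : 1 ≤ m a) (hb : 1 ≤ m b) :
    Finsupp.single a 1 + Finsupp.single b 1 ≤ m := by
  rw [Finsupp.le_def]
  intro s
  rcases eq_or_ne s a with rfl | hsa
  · simpa [Finsupp.single_apply, hab.symm] using ha
  rcases eq_or_ne s b with rfl | hsb
  · simpa [Finsupp.single_apply, hsa, (Ne.symm hsa)] using hb
  · simp [Finsupp.single_apply, Ne.symm hsa, Ne.symm hsb]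

lemma my_le_left {a b : σ} {m : σ →₀ ℕ} (h : Finsupp.single a 1 + Finsupp.single b 1 ≤ m) :
    1 ≤ m a :=
  Finsupp.single_le_iff.mp (le_trans (self_le_add_right _ _) h)

lemma my_le_right {a b : σ} {m : σ →₀ ℕ} (h : Finsupp.single a 1 + Finsupp.single b 1 ≤ m) :
    1 ≤ m b :=
  Finsupp.single_le_iff.mp (le_trans (self_le_add_left _ _) h)

/-- product of monomial-ideal spans -/
lemma my_span_mono_mul (A B : Set (σ →₀ ℕ)) :
    Ideal.span ((fun s => (monomial s (1 : K) : MvPolynomial σ K)) '' A) *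
      Ideal.span ((fun s => (monomial s (1 : K) : MvPolynomial σ K)) '' B) =
    Ideal.span ((fun s => (monomial s (1 : K) : MvPolynomial σ K)) '' (A + B)) := by
  rw [Ideal.span_mul_span']
  congr 1
  ext p
  constructor
  · rintro ⟨_, ⟨a, ha, rfl⟩, _, ⟨b, hb, rfl⟩, rfl⟩
    exact ⟨a + b, Set.add_mem_add ha hb, by simp [monomial_mul]⟩
  · rintro ⟨_, ⟨a, ha, b, hb, rfl⟩, rfl⟩
    exact ⟨monomial a 1, Set.mem_image_of_mem _ ha, monomial b 1,
      Set.mem_image_of_mem _ hb, by simp [monomial_mul]⟩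

end aux

/-- In `S = k[x_1,…,x_r]` (with `x_j` realized as `MvPolynomial.X (j-1)`), for `4 + i ≤ r`,
the product ideal `(x_1, x_3)·(x_3, x_4, …, x_{i+4})` equals the intersection
`(x_1, x_3) ∩ (x_3, …, x_{i+4}) ∩ (x_1, x_3, …, x_{i+4})²`: the degenerate union of two
linear spaces is a `(2, i+2)`-sundial. -/
theorem product_ideal_eq_sundial_ideal (k : Type*) [Field k] (r i : ℕ) (hi : 4 + i ≤ r) :
    Ideal.span {(MvPolynomial.X (⟨0, by omega⟩ : Fin r) : MvPolynomial (Fin r) k),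
        MvPolynomial.X ⟨2, by omega⟩} *
      Ideal.span ((fun j => (MvPolynomial.X j : MvPolynomial (Fin r) k)) ''
        {j : Fin r | 2 ≤ (j : ℕ) ∧ (j : ℕ) ≤ i + 3}) =
    Ideal.span {(MvPolynomial.X (⟨0, by omega⟩ : Fin r) : MvPolynomial (Fin r) k),
        MvPolynomial.X ⟨2, by omega⟩} ⊓
      Ideal.span ((fun j => (MvPolynomial.X j : MvPolynomial (Fin r) k)) ''
        {j : Fin r | 2 ≤ (j : ℕ) ∧ (j : ℕ) ≤ i + 3}) ⊓
      (Ideal.span ({(MvPolynomial.X (⟨0, by omega⟩ : Fin r) : MvPolynomial (Fin r) k)} ∪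
        (fun j => (MvPolynomial.X j : MvPolynomial (Fin r) k)) ''
          {j : Fin r | 2 ≤ (j : ℕ) ∧ (j : ℕ) ≤ i + 3})) ^ 2 := by
  set a0 : Fin r := ⟨0, by omega⟩ with ha0
  set a2 : Fin r := ⟨2, by omega⟩ with ha2
  set T : Set (Fin r) := {j : Fin r | 2 ≤ (j : ℕ) ∧ (j : ℕ) ≤ i + 3} with hT
  set e : Fin r → (Fin r →₀ ℕ) := fun j => Finsupp.single j 1 with he
  -- rewrite the X-sets as monomial images
  have hX : ∀ j : Fin r, (X j : MvPolynomial (Fin r) k) = monomial (e j) 1 := fun j => rfl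
  have hIset : ({(X a0 : MvPolynomial (Fin r) k), X a2} : Set _) =
      (fun s => (monomial s (1 : k) : MvPolynomial (Fin r) k)) '' (e '' {a0, a2}) := by
    rw [Set.image_image, Set.image_pair]; rfl
  have hJset : ((fun j => (X j : MvPolynomial (Fin r) k)) '' T) =
      (fun s => (monomial s (1 : k) : MvPolynomial (Fin r) k)) '' (e '' T) := by
    rw [Set.image_image]; rfl
  have hCset : ({(X a0 : MvPolynomial (Fin r) k)} ∪
        (fun j => (X j : MvPolynomial (Fin r) k)) '' T) =
      (fun s => (monomial s (1 : k) : MvPolynomial (Fin r) k)) '' (e '' ({a0} ∪ T)) := by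
    rw [Set.image_image, Set.image_union, Set.image_singleton]; rfl
  rw [hCset, hIset, hJset, sq, my_span_mono_mul, my_span_mono_mul]
  ext f
  rw [Ideal.mem_inf, Ideal.mem_inf, mem_ideal_span_monomial_image,
    mem_ideal_span_monomial_image, mem_ideal_span_monomial_image,
    mem_ideal_span_monomial_image]
  have key : ∀ m : Fin r →₀ ℕ,
      ((∃ s ∈ e '' {a0, a2} + e '' T, s ≤ m) ↔
        ((∃ s ∈ e '' {a0, a2}, s ≤ m) ∧ (∃ s ∈ e '' T, s ≤ m)) ∧
          (∃ s ∈ e '' ({a0} ∪ T) + e '' ({a0} ∪ T), s ≤ m)) := by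
    intro m
    have ha2T : a2 ∈ T := by constructor <;> simp [ha2]
    have ha0T : a0 ∉ T := by simp [hT, ha0]
    constructor
    · rintro ⟨s, hs, hsm⟩
      rcases Set.mem_add.mp hs with ⟨u, hu, v, hv, rfl⟩
      obtain ⟨a, haA, rfl⟩ := hu
      obtain ⟨b, hbT, rfl⟩ := hv
      refine ⟨⟨⟨e a, Set.mem_image_of_mem _ haA, le_trans (self_le_add_right _ _) hsm⟩,
        ⟨e b, Set.mem_image_of_mem _ hbT, le_trans (self_le_add_left _ _) hsm⟩⟩, ?_⟩
      rcases haA with rfl | rfl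
      · exact ⟨e a0 + e b, Set.add_mem_add (Set.mem_image_of_mem _ (Or.inl rfl))
          (Set.mem_image_of_mem _ (Or.inr hbT)), hsm⟩
      · exact ⟨e a2 + e b, Set.add_mem_add (Set.mem_image_of_mem _ (Or.inr ha2T))
          (Set.mem_image_of_mem _ (Or.inr hbT)), hsm⟩
    · rintro ⟨⟨⟨_, ⟨a, haA, rfl⟩, ham⟩, ⟨_, ⟨b, hbT, rfl⟩, hbm⟩⟩, s, hs, hsm⟩
      rcases Set.mem_add.mp hs with ⟨_, ⟨u, huC, rfl⟩, _, ⟨v, hvC, rfl⟩, rfl⟩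
      rw [Finsupp.single_le_iff] at ham hbm
      -- goal: ∃ s ∈ e '' {a0,a2} + e '' T, s ≤ m
      have mk : ∀ (x y : Fin r), x ∈ ({a0, a2} : Set (Fin r)) → y ∈ T →
          e x + e y ≤ m → ∃ s ∈ e '' {a0, a2} + e '' T, s ≤ m := fun x y hx hy h =>
        ⟨e x + e y, Set.add_mem_add (Set.mem_image_of_mem _ hx) (Set.mem_image_of_mem _ hy), h⟩
      rcases huC with rfl | huT
      · rcases hvC with rfl | hvT
        · -- u = v = a0 : m a0 ≥ 2 ≥ 1; pair with b
          have hb0 : a0 ≠ b := fun h => ha0T (h ▸ hbT)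
          exact mk a0 b (Or.inl rfl) hbT (my_pair_le_of hb0 (my_le_left hsm) hbm)
        · exact mk a0 v (Or.inl rfl) hvT hsm
      · rcases hvC with rfl | hvT
        · have hb0 : a0 ≠ u := fun h => ha0T (h ▸ huT)
          exact mk a0 u (Or.inl rfl) huT (my_pair_le_of hb0 (my_le_right hsm) (my_le_left hsm))
        · -- u, v ∈ T; use a ∈ {a0, a2}
          rcases haA with rfl | rfl
          · -- a = a0, a0 ∉ T so a ≠ u
            have hau : a0 ≠ u := fun h => ha0T (h ▸ huT)
            exact mk a0 u (Or.inl rfl) huT (my_pair_le_of hau ham (my_le_left hsm))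
          · -- a = a2
            rcases eq_or_ne a2 u with rfl | hau
            · exact mk a2 v (Or.inr rfl) hvT hsm
            · exact mk a2 u (Or.inr rfl) huT (my_pair_le_of hau ham (my_le_left hsm))
  constructor
  · intro h
    exact ⟨⟨fun m hm => ((key m).mp (h m hm)).1.1, fun m hm => ((key m).mp (h m hm)).1.2⟩,
      fun m hm => ((key m).mp (h m hm)).2⟩
  · rintro ⟨⟨h1, h2⟩, h3⟩ m hm
    exact (key m).mpr ⟨⟨h1 m hm, h2 m hm⟩, h3 m hm⟩
end
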